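/- Let f : [a,b] → ℝ be positive, integrable, and convex, with 0 ≤ a < b and α > 0. Then f((a+b)/2) ≤ (Γ(α+1)/(2(b-a)^α)) [J_{a+}^α f(b) + J_{b-}^α f(a)] ≤ (f(a)+f(b))/2, where J_{a+}^α f(b) = (1/Γ(α)) ∫_a^b (b-t)^{α-1} f(t) dt and J_{b-}^α f(a) = (1/Γ(α)) ∫_a^b (t-a)^{α-1} f(t) dt. -/

import Mathlib

open MeasureTheory intervalIntegral Set

/-- integrability of a weighted function with weight `(b - t)^r`. -/
lemma aux_int_left (a b r M : ℝ) (hab : a < b) (hr : -1 < r) (g : ℝ → ℝ)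
    (hg : AEStronglyMeasurable g (volume.restrict (Set.uIoc a b)))
    (hM : ∀ t ∈ Set.Ioc a b, |g t| ≤ M) :
    IntervalIntegrable (fun t => (b - t) ^ r * g t) volume a b := by
  have h0 : IntervalIntegrable (fun x : ℝ => x ^ r) volume (b - a) (b - b) :=
    intervalIntegral.intervalIntegrable_rpow' hr
  have hw0 := h0.comp_sub_left b
  simp only [sub_sub_cancel] at hw0
  have hw : IntervalIntegrable (fun t => (b - t) ^ r * M) volume a b := hw0.mul_const M
  have hwm : AEStronglyMeasurable (fun t => (b - t) ^ r) (volume.restrict (Set.uIoc a b)) := by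
    rw [Set.uIoc_of_le hab.le]; exact hw0.aestronglyMeasurable
  apply hw.mono_fun (hwm.mul hg)
  filter_upwards [ae_restrict_mem measurableSet_uIoc] with t ht
  rw [Set.uIoc_of_le hab.le] at ht
  have hbt : 0 ≤ b - t := by linarith [ht.2]
  have h1 : 0 ≤ (b - t) ^ r := Real.rpow_nonneg hbt r
  have h2 := hM t ht
  have hM0 : 0 ≤ M := le_trans (abs_nonneg _) h2
  simp only [Pi.mul_apply, norm_mul, Real.norm_eq_abs, abs_of_nonneg h1, abs_of_nonneg hM0]
  exact mul_le_mul_of_nonneg_left h2 h1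

/-- integrability of a weighted function with weight `(t - a)^r`. -/
lemma aux_int_right (a b r M : ℝ) (hab : a < b) (hr : -1 < r) (g : ℝ → ℝ)
    (hg : AEStronglyMeasurable g (volume.restrict (Set.uIoc a b)))
    (hM : ∀ t ∈ Set.Ioc a b, |g t| ≤ M) :
    IntervalIntegrable (fun t => (t - a) ^ r * g t) volume a b := by
  have h0 : IntervalIntegrable (fun x : ℝ => x ^ r) volume (a - a) (b - a) :=
    intervalIntegral.intervalIntegrable_rpow' hr
  have hw0 := h0.comp_sub_right a
  simp only [sub_add_cancel] at hw0
  have hw : IntervalIntegrable (fun t => (t - a) ^ r * M) volume a b := hw0.mul_const M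
  have hwm : AEStronglyMeasurable (fun t => (t - a) ^ r) (volume.restrict (Set.uIoc a b)) := by
    rw [Set.uIoc_of_le hab.le]; exact hw0.aestronglyMeasurable
  apply hw.mono_fun (hwm.mul hg)
  filter_upwards [ae_restrict_mem measurableSet_uIoc] with t ht
  rw [Set.uIoc_of_le hab.le] at ht
  have hbt : 0 ≤ t - a := by linarith [ht.1]
  have h1 : 0 ≤ (t - a) ^ r := Real.rpow_nonneg hbt r
  have h2 := hM t ht
  have hM0 : 0 ≤ M := le_trans (abs_nonneg _) h2
  simp only [Pi.mul_apply, norm_mul, Real.norm_eq_abs, abs_of_nonneg h1, abs_of_nonneg hM0]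
  exact mul_le_mul_of_nonneg_left h2 h1

lemma aux_rpow_left (a b r : ℝ) (hr : -1 < r) :
    IntervalIntegrable (fun t : ℝ => (b - t) ^ r) volume a b := by
  have h0 : IntervalIntegrable (fun x : ℝ => x ^ r) volume (b - a) (b - b) :=
    intervalIntegral.intervalIntegrable_rpow' hr
  have hw0 := h0.comp_sub_left b
  simpa only [sub_sub_cancel] using hw0

lemma aux_rpow_right (a b r : ℝ) (hr : -1 < r) :
    IntervalIntegrable (fun t : ℝ => (t - a) ^ r) volume a b := by
  have h0 : IntervalIntegrable (fun x : ℝ => x ^ r) volume (a - a) (b - a) :=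
    intervalIntegral.intervalIntegrable_rpow' hr
  have hw0 := h0.comp_sub_right a
  simpa only [sub_add_cancel] using hw0

lemma aux_B1 (a b r : ℝ) (hr : -1 < r) :
    ∫ t in a..b, (b - t) ^ r = (b - a) ^ (r + 1) / (r + 1) := by
  rw [intervalIntegral.integral_comp_sub_left (fun s => s ^ r) b, sub_self,
    integral_rpow (Or.inl hr), Real.zero_rpow (by linarith)]
  ring

lemma aux_B2 (a b r : ℝ) (hr : -1 < r) :
    ∫ t in a..b, (t - a) ^ r = (b - a) ^ (r + 1) / (r + 1) := by
  rw [intervalIntegral.integral_comp_sub_right (fun s => s ^ r) a, sub_self,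
    integral_rpow (Or.inl hr), Real.zero_rpow (by linarith)]
  ring

theorem fractional_hadamard_convex (a b α : ℝ) (f : ℝ → ℝ)
    (ha : 0 ≤ a) (hab : a < b) (hα : 0 < α)
    (hpos : ∀ x ∈ Set.Icc a b, 0 < f x)
    (hconv : ConvexOn ℝ (Set.Icc a b) f)
    (hint : IntervalIntegrable f MeasureTheory.volume a b) :
    f ((a + b) / 2) ≤ Real.Gamma (α + 1) / (2 * (b - a) ^ α) *
      ((1 / Real.Gamma α) * (∫ t in a..b, (b - t) ^ (α - 1) * f t) +
       (1 / Real.Gamma α) * (∫ t in a..b, (t - a) ^ (α - 1) * f t)) ∧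
    Real.Gamma (α + 1) / (2 * (b - a) ^ α) *
      ((1 / Real.Gamma α) * (∫ t in a..b, (b - t) ^ (α - 1) * f t) +
       (1 / Real.Gamma α) * (∫ t in a..b, (t - a) ^ (α - 1) * f t)) ≤
      (f a + f b) / 2 := by
  have hba : 0 < b - a := sub_pos.2 hab
  have hr1 : -1 < α - 1 := by linarith
  have hΓ : Real.Gamma (α + 1) = α * Real.Gamma α := Real.Gamma_add_one (ne_of_gt hα)
  have hΓpos : 0 < Real.Gamma α := Real.Gamma_pos_of_pos hα
  have hP : 0 < (b - a) ^ α := Real.rpow_pos_of_pos hba α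
  have haI : a ∈ Set.Icc a b := Set.left_mem_Icc.2 hab.le
  have hbI : b ∈ Set.Icc a b := Set.right_mem_Icc.2 hab.le
  -- bound on f
  have hM : ∀ t ∈ Set.Icc a b, f t ≤ max (f a) (f b) := by
    intro t ht
    exact hconv.le_on_segment haI hbI (by rwa [segment_eq_Icc hab.le])
  have hMabs : ∀ t ∈ Set.Ioc a b, |f t| ≤ max (f a) (f b) := by
    intro t ht
    have ht' : t ∈ Set.Icc a b := Set.Ioc_subset_Icc_self ht
    rw [abs_of_pos (hpos t ht')]
    exact hM t ht'
  have hgm : AEStronglyMeasurable f (volume.restrict (Set.uIoc a b)) := by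
    rw [Set.uIoc_of_le hab.le]; exact hint.aestronglyMeasurable
  -- the linear majorant
  set L : ℝ → ℝ := fun t => ((b - t) * f a + (t - a) * f b) / (b - a) with hL
  have hLabs : ∀ t ∈ Set.Ioc a b, |L t| ≤ |f a| + |f b| := by
    intro t ht
    have h1 : 0 ≤ b - t := by linarith [ht.2]
    have h2 : 0 ≤ t - a := by linarith [ht.1]
    rw [hL, abs_div, abs_of_pos hba, div_le_iff₀ hba]
    calc |(b - t) * f a + (t - a) * f b| ≤ |(b - t) * f a| + |(t - a) * f b| := abs_add_le _ _
      _ = (b - t) * |f a| + (t - a) * |f b| := by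
          rw [abs_mul, abs_mul, abs_of_nonneg h1, abs_of_nonneg h2]
      _ ≤ (|f a| + |f b|) * (b - a) := by nlinarith [abs_nonneg (f a), abs_nonneg (f b)]
  have hLm : AEStronglyMeasurable L (volume.restrict (Set.uIoc a b)) :=
    ((((continuous_const.sub continuous_id).mul continuous_const).add
      ((continuous_id.sub continuous_const).mul continuous_const)).div_const
      _).aestronglyMeasurable.restrict
  -- integrabilities
  have hI1 : IntervalIntegrable (fun t => (b - t) ^ (α - 1) * f t) volume a b :=
    aux_int_left a b _ _ hab hr1 f hgm hMabs
  have hI2 : IntervalIntegrable (fun t => (t - a) ^ (α - 1) * f t) volume a b :=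
    aux_int_right a b _ _ hab hr1 f hgm hMabs
  have hIs : IntervalIntegrable (fun t => (b - t) ^ (α - 1) * f (a + b - t)) volume a b := by
    have h := (hI2.comp_sub_left (a + b)).symm
    simp only [add_sub_cancel_left, add_sub_cancel_right] at h
    have he : (fun x => (a + b - x - a) ^ (α - 1) * f (a + b - x)) =
        fun x => (b - x) ^ (α - 1) * f (a + b - x) := by
      funext x; rw [show a + b - x - a = b - x from by ring]
    rwa [he] at h
  have hU1 : IntervalIntegrable (fun t => (b - t) ^ (α - 1) * L t) volume a b :=
    aux_int_left a b _ _ hab hr1 L hLm hLabs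
  have hU2 : IntervalIntegrable (fun t => (t - a) ^ (α - 1) * L t) volume a b :=
    aux_int_right a b _ _ hab hr1 L hLm hLabs
  -- substitution identity
  have hsub : (∫ t in a..b, (b - t) ^ (α - 1) * f (a + b - t)) =
      ∫ t in a..b, (t - a) ^ (α - 1) * f t := by
    have h := intervalIntegral.integral_comp_sub_left (a := a) (b := b) (fun s => (s - a) ^ (α - 1) * f s) (a + b)
    simp only [add_sub_cancel_left, add_sub_cancel_right] at h
    rw [← h]
    apply intervalIntegral.integral_congr
    intro x _
    dsimp only
    rw [show a + b - x - a = b - x from by ring]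
  -- pointwise convexity bounds
  have hc1 : ∀ t ∈ Set.Icc a b, 2 * f ((a + b) / 2) ≤ f t + f (a + b - t) := by
    intro t ht
    have ht' : a + b - t ∈ Set.Icc a b := ⟨by linarith [ht.2], by linarith [ht.1]⟩
    have h := hconv.2 ht ht' (by norm_num : (0:ℝ) ≤ 1/2) (by norm_num : (0:ℝ) ≤ 1/2)
      (by norm_num : (1:ℝ)/2 + 1/2 = 1)
    simp only [smul_eq_mul] at h
    rw [show 1/2 * t + 1/2 * (a + b - t) = (a + b) / 2 from by ring] at h
    linarith
  have hc2 : ∀ t ∈ Set.Icc a b, f t ≤ L t := by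
    intro t ht
    have h := hconv.2 haI hbI (div_nonneg (by linarith [ht.2]) hba.le)
      (div_nonneg (by linarith [ht.1]) hba.le)
      (by field_simp; ring : (b - t) / (b - a) + (t - a) / (b - a) = 1)
    simp only [smul_eq_mul] at h
    rw [show (b - t) / (b - a) * a + (t - a) / (b - a) * b = t from by field_simp; ring] at h
    rw [hL]
    calc f t ≤ (b - t) / (b - a) * f a + (t - a) / (b - a) * f b := h
      _ = ((b - t) * f a + (t - a) * f b) / (b - a) := by ring
  -- rpow arithmetic on the interval
  have hrp1 : ∀ t ∈ Set.Icc a b, (b - t) ^ (α - 1) * (b - t) = (b - t) ^ α := by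
    intro t ht
    rcases eq_or_lt_of_le ht.2 with h | h
    · rw [← h, sub_self, mul_zero, Real.zero_rpow (ne_of_gt hα)]
    · rw [show α = α - 1 + 1 from by ring, Real.rpow_add_one (sub_ne_zero.2 h.ne')]
      norm_num
  have hrp2 : ∀ t ∈ Set.Icc a b, (t - a) ^ (α - 1) * (t - a) = (t - a) ^ α := by
    intro t ht
    rcases eq_or_lt_of_le ht.1 with h | h
    · rw [h, sub_self, mul_zero, Real.zero_rpow (ne_of_gt hα)]
    · rw [show α = α - 1 + 1 from by ring, Real.rpow_add_one (sub_ne_zero.2 h.ne')]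
      norm_num
  set I1 := ∫ t in a..b, (b - t) ^ (α - 1) * f t with hI1d
  set I2 := ∫ t in a..b, (t - a) ^ (α - 1) * f t with hI2d
  -- lower bound on I1 + I2
  have key1 : 2 * f ((a + b) / 2) * ((b - a) ^ α / α) ≤ I1 + I2 := by
    have hlhs : IntervalIntegrable (fun t => (b - t) ^ (α - 1) * (2 * f ((a + b) / 2)))
        volume a b := (aux_rpow_left a b _ hr1).mul_const _
    have hmono := intervalIntegral.integral_mono_on hab.le hlhs (hI1.add hIs)
      (fun t ht => by
        have hbt : 0 ≤ (b - t) ^ (α - 1) := Real.rpow_nonneg (by linarith [ht.2]) _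
        calc (b - t) ^ (α - 1) * (2 * f ((a + b) / 2))
            ≤ (b - t) ^ (α - 1) * (f t + f (a + b - t)) :=
              mul_le_mul_of_nonneg_left (hc1 t ht) hbt
          _ = (b - t) ^ (α - 1) * f t + (b - t) ^ (α - 1) * f (a + b - t) := by ring)
    rw [intervalIntegral.integral_add hI1 hIs, hsub] at hmono
    calc 2 * f ((a + b) / 2) * ((b - a) ^ α / α)
        = (∫ t in a..b, (b - t) ^ (α - 1)) * (2 * f ((a + b) / 2)) := by
          rw [aux_B1 a b _ hr1, show α - 1 + 1 = α from by ring]; ring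
      _ = ∫ t in a..b, (b - t) ^ (α - 1) * (2 * f ((a + b) / 2)) :=
          (intervalIntegral.integral_mul_const _ _).symm
      _ ≤ I1 + I2 := hmono
  -- upper bound on I1 + I2
  have key2 : I1 + I2 ≤ (f a + f b) * ((b - a) ^ α / α) := by
    have hm1 : I1 ≤ ∫ t in a..b, (b - t) ^ (α - 1) * L t :=
      intervalIntegral.integral_mono_on hab.le hI1 hU1 (fun t ht =>
        mul_le_mul_of_nonneg_left (hc2 t ht) (Real.rpow_nonneg (by linarith [ht.2]) _))
    have hm2 : I2 ≤ ∫ t in a..b, (t - a) ^ (α - 1) * L t :=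
      intervalIntegral.integral_mono_on hab.le hI2 hU2 (fun t ht =>
        mul_le_mul_of_nonneg_left (hc2 t ht) (Real.rpow_nonneg (by linarith [ht.1]) _))
    have hC1 : (∫ t in a..b, (b - t) ^ (α - 1)) = (b - a) ^ α / α := by
      rw [aux_B1 a b _ hr1, show α - 1 + 1 = α from by ring]
    have hC2 : (∫ t in a..b, (b - t) ^ α) = (b - a) ^ (α + 1) / (α + 1) :=
      aux_B1 a b α (by linarith)
    have hD1 : (∫ t in a..b, (t - a) ^ (α - 1)) = (b - a) ^ α / α := by
      rw [aux_B2 a b _ hr1, show α - 1 + 1 = α from by ring]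
    have hD2 : (∫ t in a..b, (t - a) ^ α) = (b - a) ^ (α + 1) / (α + 1) :=
      aux_B2 a b α (by linarith)
    have hcomp1 : (∫ t in a..b, (b - t) ^ (α - 1) * L t) =
        (f a / (b - a)) * ((b - a) ^ (α + 1) / (α + 1)) +
        (f b / (b - a)) * ((b - a) * ((b - a) ^ α / α) - (b - a) ^ (α + 1) / (α + 1)) := by
      have hcg : (∫ t in a..b, (b - t) ^ (α - 1) * L t) =
          ∫ t in a..b, ((f a / (b - a)) * (b - t) ^ α +
            (f b / (b - a)) * ((b - a) * (b - t) ^ (α - 1) - (b - t) ^ α)) := by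
        apply intervalIntegral.integral_congr
        intro t ht
        rw [Set.uIcc_of_le hab.le] at ht
        dsimp only
        rw [hL]
        rw [← hrp1 t ht]
        field_simp
        ring
      rw [hcg, intervalIntegral.integral_add ((aux_rpow_left a b α (by linarith)).const_mul _)
        ((((aux_rpow_left a b _ hr1).const_mul _).sub
          (aux_rpow_left a b α (by linarith))).const_mul _),
        intervalIntegral.integral_const_mul, intervalIntegral.integral_const_mul,
        intervalIntegral.integral_sub ((aux_rpow_left a b _ hr1).const_mul _)
          (aux_rpow_left a b α (by linarith)),
        intervalIntegral.integral_const_mul, hC1, hC2]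
    have hcomp2 : (∫ t in a..b, (t - a) ^ (α - 1) * L t) =
        (f b / (b - a)) * ((b - a) ^ (α + 1) / (α + 1)) +
        (f a / (b - a)) * ((b - a) * ((b - a) ^ α / α) - (b - a) ^ (α + 1) / (α + 1)) := by
      have hcg : (∫ t in a..b, (t - a) ^ (α - 1) * L t) =
          ∫ t in a..b, ((f b / (b - a)) * (t - a) ^ α +
            (f a / (b - a)) * ((b - a) * (t - a) ^ (α - 1) - (t - a) ^ α)) := by
        apply intervalIntegral.integral_congr
        intro t ht
        rw [Set.uIcc_of_le hab.le] at ht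
        dsimp only
        rw [hL]
        rw [← hrp2 t ht]
        field_simp
        ring
      rw [hcg, intervalIntegral.integral_add ((aux_rpow_right a b α (by linarith)).const_mul _)
        ((((aux_rpow_right a b _ hr1).const_mul _).sub
          (aux_rpow_right a b α (by linarith))).const_mul _),
        intervalIntegral.integral_const_mul, intervalIntegral.integral_const_mul,
        intervalIntegral.integral_sub ((aux_rpow_right a b _ hr1).const_mul _)
          (aux_rpow_right a b α (by linarith)),
        intervalIntegral.integral_const_mul, hD1, hD2]
    have hQ : (b - a) ^ (α + 1) = (b - a) ^ α * (b - a) := Real.rpow_add_one (ne_of_gt hba) α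
    have := add_le_add hm1 hm2
    rw [hcomp1, hcomp2, hQ] at this
    calc I1 + I2 ≤ _ := this
      _ = (f a + f b) * ((b - a) ^ α / α) := by field_simp; ring
  -- put things together
  have hexpr : Real.Gamma (α + 1) / (2 * (b - a) ^ α) *
      ((1 / Real.Gamma α) * I1 + (1 / Real.Gamma α) * I2) =
      α / (2 * (b - a) ^ α) * (I1 + I2) := by
    rw [hΓ]; field_simp
  constructor
  · rw [hexpr]
    calc f ((a + b) / 2)
        = α / (2 * (b - a) ^ α) * (2 * f ((a + b) / 2) * ((b - a) ^ α / α)) := by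
          field_simp
      _ ≤ α / (2 * (b - a) ^ α) * (I1 + I2) :=
          mul_le_mul_of_nonneg_left key1 (by positivity)
  · rw [hexpr]
    calc α / (2 * (b - a) ^ α) * (I1 + I2)
        ≤ α / (2 * (b - a) ^ α) * ((f a + f b) * ((b - a) ^ α / α)) :=
          mul_le_mul_of_nonneg_left key2 (by positivity)
      _ = (f a + f b) / 2 := by field_simp
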